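/- Let each data constructor c be interpreted by a linearly bounded function, i.e., each component satisfies P_l(x^1,...,x^m) ≤ a*(1 + Σ_i Σ_j x^i_j) for a constant a. Then there is a constant b > 0 such that every data term s with |s| ≤ n satisfies [[s]]_l ≤ 2^{b*n} for every component l. -/

import Mathlib

/-- Well-typed data terms over a signature of data constructors `C`, where
`ar c` is the arity of `c`, `outW c` the tuple width of its output sort, and
`argW c i` the tuple width of the sort of its `i`-th argument.  Terms are
indexed by the tuple width of their sort. -/
inductive DTerm (C : Type) (ar : C → ℕ) (outW : C → ℕ)
    (argW : (c : C) → Fin (ar c) → ℕ) : ℕ → Type where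
  | node : (c : C) → ((i : Fin (ar c)) → DTerm C ar outW argW (argW c i)) →
      DTerm C ar outW argW (outW c)

/-- The size `|s|`: the number of symbols in a data term. -/
def dsize {C : Type} {ar : C → ℕ} {outW : C → ℕ}
    {argW : (c : C) → Fin (ar c) → ℕ} :
    ∀ {w : ℕ}, DTerm C ar outW argW w → ℕ
  | _, .node c ch => 1 + ∑ i : Fin (ar c), dsize (ch i)

/-- The interpretation of a data term, given an interpretation `I c` of each
data constructor `c` as a function from tuples of naturals to a tuple. -/
def dinterp {C : Type} {ar : C → ℕ} {outW : C → ℕ}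
    {argW : (c : C) → Fin (ar c) → ℕ}
    (I : (c : C) → ((i : Fin (ar c)) → (Fin (argW c i) → ℕ)) →
      (Fin (outW c) → ℕ)) :
    ∀ {w : ℕ}, DTerm C ar outW argW w → (Fin w → ℕ)
  | _, .node c ch => I c (fun i => dinterp I (ch i))

/-- If every data constructor is interpreted by a linearly bounded function,
then there is a constant `b > 0` such that every data term `s` with `|s| ≤ n`
satisfies `[[s]]_l ≤ 2^(b*n)` for every component `l`. -/
theorem linearly_bounded_interpretation_exponential_bound
    {C : Type} [Fintype C] {ar : C → ℕ} {outW : C → ℕ}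
    {argW : (c : C) → Fin (ar c) → ℕ}
    (I : (c : C) → ((i : Fin (ar c)) → (Fin (argW c i) → ℕ)) →
      (Fin (outW c) → ℕ))
    (hlin : ∀ c : C, ∃ a : ℕ,
      ∀ x : (i : Fin (ar c)) → (Fin (argW c i) → ℕ),
        ∀ l, I c x l ≤ a * (1 + ∑ i, ∑ j, x i j)) :
    ∃ b : ℕ, 0 < b ∧ ∀ (w : ℕ) (s : DTerm C ar outW argW w) (n : ℕ),
      dsize s ≤ n → ∀ l, dinterp I s l ≤ 2 ^ (b * n) := by
  classical
  set a : C → ℕ := fun c => (hlin c).choose with ha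
  have hspec : ∀ c x l, I c x l ≤ a c * (1 + ∑ i, ∑ j, x i j) :=
    fun c => (hlin c).choose_spec
  set b : ℕ := 1 + Finset.univ.sup (fun c : C => a c * (1 + ∑ i, argW c i)) with hb
  have hb0 : 0 < b := Nat.succ_le_iff.mp (Nat.le_add_right 1 _)
  have hbc : ∀ c : C, a c * (1 + ∑ i, argW c i) ≤ 2 ^ b := by
    intro c
    calc a c * (1 + ∑ i, argW c i)
        ≤ Finset.univ.sup (fun c : C => a c * (1 + ∑ i, argW c i)) :=
          Finset.le_sup (f := fun c : C => a c * (1 + ∑ i, argW c i)) (Finset.mem_univ c)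
      _ ≤ b := Nat.le_add_left _ 1
      _ ≤ 2 ^ b := Nat.le_of_lt (Nat.lt_two_pow_self (n := b))
  refine ⟨b, hb0, ?_⟩
  have key : ∀ (w : ℕ) (s : DTerm C ar outW argW w) (l : Fin w),
      dinterp I s l ≤ 2 ^ (b * dsize s) := by
    intro w s
    induction s with
    | node c ch ih =>
      intro l
      set S : ℕ := ∑ i, dsize (ch i) with hS
      have hchild : ∀ i : Fin (ar c), ∀ j, dinterp I (ch i) j ≤ 2 ^ (b * S) := by
        intro i j
        refine (ih i j).trans (Nat.pow_le_pow_right (by norm_num) ?_)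
        exact Nat.mul_le_mul_left b (Finset.single_le_sum (f := fun i => dsize (ch i)) (fun _ _ => Nat.zero_le _) (Finset.mem_univ i))
      have h1 : dinterp I (.node c ch) l
          ≤ a c * (1 + ∑ i, ∑ j, dinterp I (ch i) j) := hspec c _ l
      have h2 : (∑ i : Fin (ar c), ∑ j, dinterp I (ch i) j)
          ≤ (∑ i, argW c i) * 2 ^ (b * S) := by
        rw [Finset.sum_mul]
        refine Finset.sum_le_sum fun i _ => ?_
        calc (∑ j, dinterp I (ch i) j) ≤ ∑ _j : Fin (argW c i), 2 ^ (b * S) :=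
              Finset.sum_le_sum fun j _ => hchild i j
          _ = argW c i * 2 ^ (b * S) := by simp [Finset.sum_const, mul_comm]
      have h3 : 1 + (∑ i, argW c i) * 2 ^ (b * S)
          ≤ (1 + ∑ i, argW c i) * 2 ^ (b * S) := by
        have h4 : (1:ℕ) ≤ 2 ^ (b * S) := Nat.one_le_two_pow
        nlinarith [h4]
      calc dinterp I (.node c ch) l
          ≤ a c * (1 + ∑ i, ∑ j, dinterp I (ch i) j) := h1
        _ ≤ a c * (1 + (∑ i, argW c i) * 2 ^ (b * S)) :=
            Nat.mul_le_mul_left _ (Nat.add_le_add_left h2 1)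
        _ ≤ a c * ((1 + ∑ i, argW c i) * 2 ^ (b * S)) := Nat.mul_le_mul_left _ h3
        _ = (a c * (1 + ∑ i, argW c i)) * 2 ^ (b * S) := by ring
        _ ≤ 2 ^ b * 2 ^ (b * S) := by gcongr; exact hbc c
        _ = 2 ^ (b * (1 + S)) := by rw [← pow_add]; congr 1; ring
        _ = 2 ^ (b * dsize (.node c ch)) := by rw [dsize]
  intro w s n hn l
  exact (key w s l).trans (Nat.pow_le_pow_right (by norm_num)
    (Nat.mul_le_mul_left b hn))
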